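/- If A, B ∈ S(n,ℝ) commute (AB = BA), then there exists an orthogonal matrix E and real numbers α₁,…,αₙ, β₁,…,βₙ with EᵀAE = diag(α₁,…,αₙ), EᵀBE = diag(β₁,…,βₙ), and for every j ≥ 1 the set Λ_j(L) = {λ > 0 : det Q_j(λL) = 0} (with L = [[A,0],[0,B]]) equals { j/√(α_k β_k) : k ∈ {1,…,n}, α_k β_k > 0 }. -/

import Mathlib

open Matrix

/-- The standard `2n × 2n` symplectic matrix `J = [[0, -I],[I, 0]]`. -/
noncomputable def Jmat (n : ℕ) : Matrix (Fin n ⊕ Fin n) (Fin n ⊕ Fin n) ℝ :=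
  fromBlocks 0 (-1) 1 0

/-- `Q_j(K) = [[-K, jJᵀ],[jJ, -K]]`. -/
noncomputable def Qmat (n j : ℕ) (K : Matrix (Fin n ⊕ Fin n) (Fin n ⊕ Fin n) ℝ) :
    Matrix ((Fin n ⊕ Fin n) ⊕ (Fin n ⊕ Fin n)) ((Fin n ⊕ Fin n) ⊕ (Fin n ⊕ Fin n)) ℝ :=
  fromBlocks (-K) ((j : ℝ) • (Jmat n)ᵀ) ((j : ℝ) • Jmat n) (-K)

/-- `Λ_j(L) = {λ > 0 : det Q_j(λ L) = 0}`. -/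
noncomputable def Lam (n j : ℕ) (L : Matrix (Fin n ⊕ Fin n) (Fin n ⊕ Fin n) ℝ) : Set ℝ :=
  {l : ℝ | 0 < l ∧ (Qmat n j (l • L)).det = 0}

lemma simul_diag (n : ℕ) (A B : Matrix (Fin n) (Fin n) ℝ) (hA : A.IsSymm) (hB : B.IsSymm)
    (hcomm : A * B = B * A) :
    ∃ (E : Matrix (Fin n) (Fin n) ℝ) (α β : Fin n → ℝ),
      Eᵀ * E = 1 ∧ Eᵀ * A * E = diagonal α ∧ Eᵀ * B * E = diagonal β := by
  classical
  have hAH : A.IsHermitian := by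
    rwa [Matrix.IsHermitian, Matrix.conjTranspose_eq_transpose_of_trivial]
  have hBH : B.IsHermitian := by
    rwa [Matrix.IsHermitian, Matrix.conjTranspose_eq_transpose_of_trivial]
  set A' := Matrix.toEuclideanLin A with hA'def
  set B' := Matrix.toEuclideanLin B with hB'def
  have hA' : A'.IsSymmetric := Matrix.isHermitian_iff_isSymmetric.1 hAH
  have hB' : B'.IsSymmetric := Matrix.isHermitian_iff_isSymmetric.1 hBH
  have hAB : Commute A' B' := by
    apply LinearMap.ext; intro v
    show A' (B' v) = B' (A' v)
    simp only [hA'def, hB'def, Matrix.toEuclideanLin_apply, Equiv.apply_symm_apply,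
      Matrix.mulVec_mulVec, hcomm]
  have hInt := LinearMap.IsSymmetric.directSum_isInternal_of_commute hA' hB' hAB
  have hOrth := LinearMap.IsSymmetric.orthogonalFamily_eigenspace_inf_eigenspace hA' hB'
  set V : ℝ × ℝ → Submodule ℝ (EuclideanSpace ℝ (Fin n)) :=
    fun i => Module.End.eigenspace A' i.2 ⊓ Module.End.eigenspace B' i.1 with hVdef
  have hindep : iSupIndep V := hInt.submodule_iSupIndep
  haveI : Fintype {p : ℝ × ℝ // V p ≠ ⊥} := hindep.fintypeNeBotOfFiniteDimensional
  set V' : {p : ℝ × ℝ // V p ≠ ⊥} → Submodule ℝ (EuclideanSpace ℝ (Fin n)) :=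
    fun p => V p.1 with hV'def
  have hInt' : DirectSum.IsInternal V' := by
    rw [DirectSum.isInternal_submodule_iff_iSupIndep_and_iSup_eq_top]
    constructor
    · exact hindep.comp Subtype.val_injective
    · apply le_antisymm le_top
      rw [← hInt.submodule_iSup_eq_top]
      apply iSup_le
      intro p
      by_cases hp : V p = ⊥
      · rw [hp]; exact bot_le
      · exact le_iSup V' ⟨p, hp⟩
  have hOrth' : OrthogonalFamily ℝ (fun p => V' p) (fun p => (V' p).subtypeₗᵢ) :=
    hOrth.comp Subtype.val_injective
  have hn : Module.finrank ℝ (EuclideanSpace ℝ (Fin n)) = n := by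
    simp [finrank_euclideanSpace]
  let b := hInt'.subordinateOrthonormalBasis hn hOrth'
  let μ : Fin n → ℝ × ℝ := fun k => (hInt'.subordinateOrthonormalBasisIndex hn k hOrth').1
  have hmem : ∀ k, b k ∈ Module.End.eigenspace A' (μ k).2 ⊓ Module.End.eigenspace B' (μ k).1 :=
    fun k => hInt'.subordinateOrthonormalBasis_subordinate hn k hOrth'
  have hON := b.orthonormal
  rw [orthonormal_iff_ite] at hON
  have key : ∀ k l : Fin n, ∑ i, b k i * b l i = if k = l then 1 else 0 := by
    intro k l
    have := hON k l
    rw [PiLp.inner_apply] at this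
    simpa [RCLike.inner_apply, conj_trivial, mul_comm] using this
  have hAe : ∀ l : Fin n, A *ᵥ ⇑(b l) = (μ l).2 • ⇑(b l) := by
    intro l
    have h1 := (Submodule.mem_inf.mp (hmem l)).1
    rw [Module.End.mem_eigenspace_iff] at h1
    funext i
    have := congrFun (congrArg (fun v : EuclideanSpace ℝ (Fin n) => (v : Fin n → ℝ)) h1) i
    simpa [hA'def, Matrix.toEuclideanLin_apply] using this
  have hBe : ∀ l : Fin n, B *ᵥ ⇑(b l) = (μ l).1 • ⇑(b l) := by
    intro l
    have h1 := (Submodule.mem_inf.mp (hmem l)).2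
    rw [Module.End.mem_eigenspace_iff] at h1
    funext i
    have := congrFun (congrArg (fun v : EuclideanSpace ℝ (Fin n) => (v : Fin n → ℝ)) h1) i
    simpa [hB'def, Matrix.toEuclideanLin_apply] using this
  refine ⟨Matrix.of fun i k => b k i, fun k => (μ k).2, fun k => (μ k).1, ?_, ?_, ?_⟩
  · ext k l
    simp only [Matrix.mul_apply, Matrix.transpose_apply, Matrix.of_apply, Matrix.one_apply]
    exact key k l
  · ext k l
    rw [Matrix.mul_assoc, Matrix.mul_apply]
    have hcol : ∀ i, (A * Matrix.of fun i k => b k i) i l = (μ l).2 * b l i := by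
      intro i
      rw [Matrix.mul_apply]
      have := congrFun (hAe l) i
      simpa [Matrix.mulVec, dotProduct] using this
    simp only [Matrix.transpose_apply, Matrix.of_apply, hcol]
    rw [Matrix.diagonal_apply]
    have : ∑ i, b k i * ((μ l).2 * b l i) = (μ l).2 * ∑ i, b k i * b l i := by
      rw [Finset.mul_sum]; congr 1; funext i; ring
    rw [this, key k l]
    by_cases h : k = l <;> simp [h]
  · ext k l
    rw [Matrix.mul_assoc, Matrix.mul_apply]
    have hcol : ∀ i, (B * Matrix.of fun i k => b k i) i l = (μ l).1 * b l i := by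
      intro i
      rw [Matrix.mul_apply]
      have := congrFun (hBe l) i
      simpa [Matrix.mulVec, dotProduct] using this
    simp only [Matrix.transpose_apply, Matrix.of_apply, hcol]
    rw [Matrix.diagonal_apply]
    have : ∑ i, b k i * ((μ l).1 * b l i) = (μ l).1 * ∑ i, b k i * b l i := by
      rw [Finset.mul_sum]; congr 1; funext i; ring
    rw [this, key k l]
    by_cases h : k = l <;> simp [h]

def myE (n : ℕ) : Fin 2 × (Fin 2 × Fin n) ≃ ((Fin n ⊕ Fin n) ⊕ (Fin n ⊕ Fin n)) where
  toFun p := match p with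
    | (⟨0,_⟩, ⟨0,_⟩, k) => Sum.inl (Sum.inl k)
    | (⟨0,_⟩, ⟨1,_⟩, k) => Sum.inl (Sum.inr k)
    | (⟨1,_⟩, ⟨0,_⟩, k) => Sum.inr (Sum.inr k)
    | (⟨1,_⟩, ⟨1,_⟩, k) => Sum.inr (Sum.inl k)
  invFun q := match q with
    | Sum.inl (Sum.inl k) => (0, 0, k)
    | Sum.inl (Sum.inr k) => (0, 1, k)
    | Sum.inr (Sum.inr k) => (1, 0, k)
    | Sum.inr (Sum.inl k) => (1, 1, k)
  left_inv := by rintro ⟨⟨i,hi⟩, ⟨s,hs⟩, k⟩; interval_cases i <;> interval_cases s <;> rfl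
  right_inv := by rintro ((k|k)|(k|k)) <;> rfl

lemma detQ (n j : ℕ) (l : ℝ) (α β : Fin n → ℝ) :
    (Qmat n j (l • fromBlocks (diagonal α) 0 0 (diagonal β))).det
      = ∏ k, (l ^ 2 * (α k * β k) - (j : ℝ) ^ 2) ^ 2 := by
  classical
  set N : Fin 2 × Fin n → Matrix (Fin 2) (Fin 2) ℝ := fun p =>
    if p.1 = 0 then !![-(l * α p.2), j; j, -(l * β p.2)]
    else !![-(l * β p.2), -j; -j, -(l * α p.2)] with hN
  have hsub : (Qmat n j (l • fromBlocks (diagonal α) 0 0 (diagonal β))).submatrix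
      (myE n) (myE n) = blockDiagonal N := by
    ext p q
    obtain ⟨⟨i, hi⟩, ⟨s, hs⟩, k⟩ := p
    obtain ⟨⟨i', hi'⟩, ⟨s', hs'⟩, k'⟩ := q
    interval_cases i <;> interval_cases i' <;> interval_cases s <;> interval_cases s' <;>
      by_cases hk : k = k' <;>
      simp [myE, hN, Qmat, Jmat, Matrix.blockDiagonal_apply, hk, Prod.ext_iff,
        Matrix.one_apply, Matrix.diagonal_apply, Matrix.submatrix_apply, eq_comm]
  have h1 := Matrix.det_submatrix_equiv_self (myE n)
    (Qmat n j (l • fromBlocks (diagonal α) 0 0 (diagonal β)))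
  rw [← h1, hsub, Matrix.det_blockDiagonal, Fintype.prod_prod_type]
  rw [Fin.prod_univ_two]
  rw [← Finset.prod_mul_distrib]
  apply Finset.prod_congr rfl
  intro k _
  simp only [hN, if_pos rfl, Matrix.det_fin_two_of]
  norm_num
  ring

lemma detQ_conj (n j : ℕ) (l : ℝ) (A B E : Matrix (Fin n) (Fin n) ℝ) (α β : Fin n → ℝ)
    (hE : Eᵀ * E = 1) (hα : Eᵀ * A * E = diagonal α) (hβ : Eᵀ * B * E = diagonal β) :
    (Qmat n j (l • fromBlocks A 0 0 B)).det
      = (Qmat n j (l • fromBlocks (diagonal α) 0 0 (diagonal β))).det := by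
  set U : Matrix (Fin n ⊕ Fin n) (Fin n ⊕ Fin n) ℝ := fromBlocks E 0 0 E with hUdef
  have hU : Uᵀ * U = 1 := by
    simp [hUdef, fromBlocks_transpose, fromBlocks_multiply, hE, ← fromBlocks_one]
  have hUJ : Uᵀ * Jmat n * U = Jmat n := by
    simp [hUdef, Jmat, fromBlocks_transpose, fromBlocks_multiply, hE, Matrix.mul_one,
      Matrix.mul_neg, Matrix.neg_mul]
  have hUJt : Uᵀ * (Jmat n)ᵀ * U = (Jmat n)ᵀ := by
    simp [hUdef, Jmat, fromBlocks_transpose, fromBlocks_multiply, hE, Matrix.mul_one,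
      Matrix.mul_neg, Matrix.neg_mul]
  have hUL : Uᵀ * fromBlocks A 0 0 B * U = fromBlocks (diagonal α) 0 0 (diagonal β) := by
    simp [hUdef, fromBlocks_transpose, fromBlocks_multiply, hα, hβ, Matrix.mul_assoc]
  set W : Matrix ((Fin n ⊕ Fin n) ⊕ (Fin n ⊕ Fin n)) ((Fin n ⊕ Fin n) ⊕ (Fin n ⊕ Fin n)) ℝ :=
    fromBlocks U 0 0 U with hWdef
  have hW : Wᵀ * W = 1 := by
    simp [hWdef, fromBlocks_transpose, fromBlocks_multiply, hU, ← fromBlocks_one]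
  have hQ : Wᵀ * Qmat n j (l • fromBlocks A 0 0 B) * W
      = Qmat n j (l • fromBlocks (diagonal α) 0 0 (diagonal β)) := by
    have e1 : Uᵀ * (-(l • fromBlocks A 0 0 B)) * U
        = -(l • fromBlocks (diagonal α) 0 0 (diagonal β)) := by
      rw [Matrix.mul_neg, Matrix.neg_mul, Matrix.mul_smul, Matrix.smul_mul, hUL]
    have e2 : Uᵀ * ((j : ℝ) • Jmat n) * U = (j : ℝ) • Jmat n := by
      rw [Matrix.mul_smul, Matrix.smul_mul, hUJ]
    have e3 : Uᵀ * ((j : ℝ) • (Jmat n)ᵀ) * U = (j : ℝ) • (Jmat n)ᵀ := by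
      rw [Matrix.mul_smul, Matrix.smul_mul, hUJt]
    simp only [Qmat, hWdef, fromBlocks_transpose, fromBlocks_multiply, Matrix.transpose_zero,
      Matrix.mul_zero, Matrix.zero_mul, add_zero, zero_add, e1, e2, e3]
  have hdet : (Wᵀ * Qmat n j (l • fromBlocks A 0 0 B) * W).det
      = (Qmat n j (l • fromBlocks A 0 0 B)).det := by
    rw [Matrix.det_mul, Matrix.det_mul]
    have : Wᵀ.det * W.det = 1 := by rw [← Matrix.det_mul, hW, Matrix.det_one]
    calc Wᵀ.det * (Qmat n j (l • fromBlocks A 0 0 B)).det * W.det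
        = Wᵀ.det * W.det * (Qmat n j (l • fromBlocks A 0 0 B)).det := by ring
      _ = _ := by rw [this, one_mul]
  rw [← hdet, hQ]

theorem stmt7 (n : ℕ) (A B : Matrix (Fin n) (Fin n) ℝ) (hA : A.IsSymm) (hB : B.IsSymm)
    (hcomm : A * B = B * A) :
    ∃ (E : Matrix (Fin n) (Fin n) ℝ) (α β : Fin n → ℝ),
      Eᵀ * E = 1 ∧
      Eᵀ * A * E = diagonal α ∧
      Eᵀ * B * E = diagonal β ∧
      ∀ j : ℕ, 1 ≤ j →
        Lam n j (fromBlocks A 0 0 B) =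
          {x : ℝ | ∃ k : Fin n, 0 < α k * β k ∧ x = (j : ℝ) / Real.sqrt (α k * β k)} := by
  obtain ⟨E, α, β, hE, hα, hβ⟩ := simul_diag n A B hA hB hcomm
  refine ⟨E, α, β, hE, hα, hβ, ?_⟩
  intro j hj
  have hj' : (0 : ℝ) < j := by exact_mod_cast Nat.lt_of_lt_of_le Nat.zero_lt_one hj
  have hdet : ∀ l : ℝ, (Qmat n j (l • fromBlocks A 0 0 B)).det
      = ∏ k, (l ^ 2 * (α k * β k) - (j : ℝ) ^ 2) ^ 2 := fun l =>
    (detQ_conj n j l A B E α β hE hα hβ).trans (detQ n j l α β)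
  ext x
  simp only [Lam, Set.mem_setOf_eq]
  constructor
  · rintro ⟨hx, hd⟩
    rw [hdet] at hd
    obtain ⟨k, -, hk⟩ := Finset.prod_eq_zero_iff.mp hd
    have h0 : x ^ 2 * (α k * β k) - (j : ℝ) ^ 2 = 0 := by
      exact pow_eq_zero_iff two_ne_zero |>.mp hk
    have hc : 0 < α k * β k := by nlinarith [mul_pos hx hx, mul_pos hj' hj']
    refine ⟨k, hc, ?_⟩
    have hs : ((j : ℝ) / x) ^ 2 = α k * β k := by
      field_simp
      nlinarith [h0]
    rw [← hs, Real.sqrt_sq (le_of_lt (div_pos hj' hx))]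
    field_simp
  · rintro ⟨k, hc, rfl⟩
    have hs : 0 < Real.sqrt (α k * β k) := Real.sqrt_pos.mpr hc
    refine ⟨div_pos hj' hs, ?_⟩
    rw [hdet]
    apply Finset.prod_eq_zero (Finset.mem_univ k)
    have : ((j : ℝ) / Real.sqrt (α k * β k)) ^ 2 * (α k * β k) = (j : ℝ) ^ 2 := by
      rw [div_pow, Real.sq_sqrt hc.le]
      field_simp
      exact div_self hc.ne'
    rw [this, sub_self]
    norm_num
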